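/- With notation as in the previous context, for a point R on the twisted Edwards curve E_{a,d}, the rational functions (φ_{R,R}/(ℓ_{2,2R}·ℓ_{1,O}))² · φ_{2R,2R}/(ℓ_{2,4R}·ℓ_{1,O}) and φ_{R,R}² / (φ_{-2R,-2R} · φ_{O,O}) have equal divisors. -/
import Mathlib


open Finsupp

/-- Affine points of the twisted Edwards curve `a*x^2 + y^2 = 1 + d*x^2*y^2`. -/
def EdwardsPoint (F : Type*) [Field F] (a d : F) : Type _ :=
  {P : F × F // a * P.1 ^ 2 + P.2 ^ 2 = 1 + d * P.1 ^ 2 * P.2 ^ 2}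

/-- Theorem 1(1) of Xu–Lin. The rational functions
`(φ_{R,R}/(ℓ_{2,2R}·ℓ_{1,O}))² · φ_{2R,2R}/(ℓ_{2,4R}·ℓ_{1,O})` and
`φ_{R,R}² / (φ_{-2R,-2R} · φ_{O,O})` have equal divisors.
Here each conic `φ_{S,T}` has divisor `(S) + (T) + (-(S+T)) + (O') - 2(Ω₁) - 2(Ω₂)`;
the line `ℓ_{2,S}` through `S` has divisor `(S) + (-S) - 2(Ω₁)` (so, e.g.,
`div(ℓ_{2,2R}) = (2R) + (-2R) - 2(Ω₁)`), and the line `ℓ_{1,O}` through the neutral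
point `O` has divisor `(O) + (O') - 2(Ω₂)`, as in Arène et al. Theorem 2. -/
theorem divisor_identity_XuLin_1 (p : ℕ) [Fact p.Prime] (hp : p ≠ 2) (a d : ZMod p)
    (ha : a ≠ 0) (hd : d ≠ 0) (had : a ≠ d)
    [AddCommGroup (EdwardsPoint (ZMod p) a d)]
    (hO : (Subtype.val (0 : EdwardsPoint (ZMod p) a d) : ZMod p × ZMod p) = (0, 1))
    {X : Type*} (ι : EdwardsPoint (ZMod p) a d → X) (hι : Function.Injective ι)
    (ω' : EdwardsPoint (ZMod p) a d) (hω' : (Subtype.val ω' : ZMod p × ZMod p) = (0, -1))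
    (Ω₁ Ω₂ : X) (hΩ₁ : Ω₁ ∉ Set.range ι) (hΩ₂ : Ω₂ ∉ Set.range ι) (hΩ : Ω₁ ≠ Ω₂)
    (divφ : EdwardsPoint (ZMod p) a d → EdwardsPoint (ZMod p) a d → (X →₀ ℤ))
    (hφ : ∀ S T, divφ S T =
      Finsupp.single (ι S) 1 + Finsupp.single (ι T) 1 + Finsupp.single (ι (-(S + T))) 1
        + Finsupp.single (ι ω') 1
        - (2 : ℤ) • Finsupp.single Ω₁ 1 - (2 : ℤ) • Finsupp.single Ω₂ 1)
    (divℓ₂ : EdwardsPoint (ZMod p) a d → (X →₀ ℤ))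
    (hℓ₂ : ∀ S, divℓ₂ S =
      Finsupp.single (ι S) 1 + Finsupp.single (ι (-S)) 1 - (2 : ℤ) • Finsupp.single Ω₁ 1)
    (divℓ₁O : X →₀ ℤ)
    (hℓ₁O : divℓ₁O =
      Finsupp.single (ι 0) 1 + Finsupp.single (ι ω') 1 - (2 : ℤ) • Finsupp.single Ω₂ 1)
    (R : EdwardsPoint (ZMod p) a d) :
    (2 : ℤ) • (divφ R R - divℓ₂ (2 • R) - divℓ₁O)
        + (divφ (2 • R) (2 • R) - divℓ₂ (4 • R) - divℓ₁O)
      = (2 : ℤ) • divφ R R - divφ (-(2 • R)) (-(2 • R)) - divφ 0 0 := by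
  have e1 : R + R = 2 • R := (two_smul ℕ R).symm
  have e2 : (2 • R : EdwardsPoint (ZMod p) a d) + 2 • R = 4 • R := by
    rw [← add_smul]
  have e3 : -(-(2 • R) + -(2 • R)) = (4 • R : EdwardsPoint (ZMod p) a d) := by
    rw [← neg_add, neg_neg, ← add_smul]
  have e4 : (0 : EdwardsPoint (ZMod p) a d) + 0 = 0 := add_zero 0
  have e5 : -(0 : EdwardsPoint (ZMod p) a d) = 0 := neg_zero
  rw [hφ, hφ, hφ, hφ, hℓ₂, hℓ₂, hℓ₁O, e1, e2, e3, e4, e5]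
  abel
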